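/- arXiv:2501.19388 — 3 statements merged into one kernel-verified Lean document; each statement's English description precedes it below -/
import Mathlib

section
/- Consider a finite rooted tree where each node v has a set of children ch(v) and a reward function θ^v : A × A^{ch(v)} → ℝ over a finite action set A. Define by induction from the leaves: μ*(v)(a) = max over children-action tuples b of [θ^v(a, b) - ∑_{w ∈ ch(v)} (max_{b'} μ*(w)(b') - μ*(w)(b_w))] (for leaves, μ*(v)(a) = θ^v(a)). Then ∑_{v ∈ V} max_{a} μ*(v)(a) = max over all joint action assignments (a^v)_{v∈V} of ∑_{v ∈ V} θ^v(a^v, a^{ch(v)}). -/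
open Finset

section Aux

variable {V A : Type*} [Fintype V] [DecidableEq V] [Fintype A] [Nonempty A]

/-- Best value of `μs` at node `w`. -/
noncomputable def Mx (μs : V → A → ℝ) (w : V) : ℝ :=
  Finset.univ.sup' Finset.univ_nonempty (μs w)

/-- A children-action tuple achieving the sup in the recursion for `μs v a`. -/
noncomputable def bsel (ch : V → Finset V) (θ : V → A → (V → A) → ℝ)
    (μs : V → A → ℝ) (v : V) (a : A) : V → A :=
  (Finset.exists_mem_eq_sup' Finset.univ_nonempty (fun b : V → A =>
      θ v a b - ∑ w ∈ ch v, (Mx μs w - μs w (b w)))).choose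

lemma bsel_spec (ch : V → Finset V) (θ : V → A → (V → A) → ℝ)
    (μs : V → A → ℝ) (v : V) (a : A) :
    θ v a (bsel ch θ μs v a) - ∑ w ∈ ch v, (Mx μs w - μs w (bsel ch θ μs v a w))
      = Finset.univ.sup' Finset.univ_nonempty (fun b : V → A =>
          θ v a b - ∑ w ∈ ch v, (Mx μs w - μs w (b w))) :=
  ((Finset.exists_mem_eq_sup' Finset.univ_nonempty (fun b : V → A =>
      θ v a b - ∑ w ∈ ch v, (Mx μs w - μs w (b w)))).choose_spec).2.symm

/-- Parent function. -/
noncomputable def pa (ch : V → Finset V) (r : V)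
    (hparent : ∀ v, v ≠ r → ∃! u, v ∈ ch u) (v : V) : V :=
  if h : v = r then r else (hparent v h).exists.choose

lemma pa_mem (ch : V → Finset V) (r : V)
    (hparent : ∀ v, v ≠ r → ∃! u, v ∈ ch u) {v : V} (h : v ≠ r) :
    v ∈ ch (pa ch r hparent v) := by
  rw [pa, dif_neg h]
  exact (hparent v h).exists.choose_spec

lemma pa_eq (ch : V → Finset V) (r : V)
    (hparent : ∀ v, v ≠ r → ∃! u, v ∈ ch u) {v u : V} (h : v ≠ r) (hu : v ∈ ch u) :
    pa ch r hparent v = u := by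
  obtain ⟨u', _, huniq⟩ := hparent v h
  rw [huniq _ (pa_mem ch r hparent h), huniq _ hu]

/-- The efficient joint action, defined top-down from the root. -/
noncomputable def sig (ch : V → Finset V) (r : V) (rank : V → ℕ)
    (hrank : ∀ v, ∀ w ∈ ch v, rank w < rank v)
    (hparent : ∀ v, v ≠ r → ∃! u, v ∈ ch u)
    (θ : V → A → (V → A) → ℝ) (μs : V → A → ℝ) (v : V) : A :=
  if h : v = r then (Finset.exists_mem_eq_sup' Finset.univ_nonempty (μs r)).choose
  else bsel ch θ μs (pa ch r hparent v)
    (sig ch r rank hrank hparent θ μs (pa ch r hparent v)) v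
termination_by Finset.univ.sup rank + 1 - rank v
decreasing_by
  have hmem : v ∈ ch (pa ch r hparent v) := pa_mem ch r hparent h
  have h1 : rank v < rank (pa ch r hparent v) := hrank _ _ hmem
  have h2 : rank (pa ch r hparent v) ≤ Finset.univ.sup rank :=
    Finset.le_sup (Finset.mem_univ _)
  omega

lemma sig_root (ch : V → Finset V) (r : V) (rank : V → ℕ)
    (hrank : ∀ v, ∀ w ∈ ch v, rank w < rank v)
    (hparent : ∀ v, v ≠ r → ∃! u, v ∈ ch u)
    (θ : V → A → (V → A) → ℝ) (μs : V → A → ℝ) :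
    μs r (sig ch r rank hrank hparent θ μs r) = Mx μs r := by
  rw [sig, dif_pos rfl]
  exact ((Finset.exists_mem_eq_sup' Finset.univ_nonempty (μs r)).choose_spec).2.symm

lemma sig_child (ch : V → Finset V) (r : V) (rank : V → ℕ)
    (hrank : ∀ v, ∀ w ∈ ch v, rank w < rank v)
    (hroot : ∀ u, r ∉ ch u)
    (hparent : ∀ v, v ≠ r → ∃! u, v ∈ ch u)
    (θ : V → A → (V → A) → ℝ) (μs : V → A → ℝ)
    {v w : V} (hw : w ∈ ch v) :
    sig ch r rank hrank hparent θ μs w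
      = bsel ch θ μs v (sig ch r rank hrank hparent θ μs v) w := by
  have hne : w ≠ r := fun h => hroot v (h ▸ hw)
  rw [sig, dif_neg hne, pa_eq ch r hparent hne hw]

end Aux

/-- Social welfare identity for a finite rooted tree with transfers: the sum over nodes of the
best net utility (after paying optimal incentives) equals the maximal social welfare. -/
theorem transfers_restore_efficiency
    {V A : Type*} [Fintype V] [DecidableEq V] [Fintype A] [Nonempty A]
    (ch : V → Finset V) (r : V) (rank : V → ℕ)
    (hrank : ∀ v, ∀ w ∈ ch v, rank w < rank v)
    (hroot : ∀ u, r ∉ ch u)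
    (hparent : ∀ v, v ≠ r → ∃! u, v ∈ ch u)
    (θ : V → A → (V → A) → ℝ)
    (hθ : ∀ v a (f g : V → A), (∀ w ∈ ch v, f w = g w) → θ v a f = θ v a g)
    (μs : V → A → ℝ)
    (hμ : ∀ v a, μs v a = Finset.univ.sup' Finset.univ_nonempty (fun b : V → A =>
        θ v a b - ∑ w ∈ ch v,
          (Finset.univ.sup' Finset.univ_nonempty (fun a' : A => μs w a') - μs w (b w)))) :
    ∑ v : V, Finset.univ.sup' Finset.univ_nonempty (fun a : A => μs v a)
      = Finset.univ.sup' Finset.univ_nonempty (fun σ : V → A => ∑ v : V, θ v (σ v) σ) := by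
  classical
  -- rewrite goal in terms of Mx
  have hMx : ∀ v, Finset.univ.sup' Finset.univ_nonempty (fun a : A => μs v a) = Mx μs v :=
    fun v => rfl
  -- the child sets partition V \ {r}
  have hbiUnion : Finset.univ.biUnion ch = Finset.univ.erase r := by
    ext w
    simp only [Finset.mem_biUnion, Finset.mem_univ, true_and, Finset.mem_erase, and_true]
    constructor
    · rintro ⟨u, hu⟩ h
      exact hroot u (h ▸ hu)
    · intro h
      exact (hparent w h).exists
  have hdisj : ∀ u ∈ Finset.univ, ∀ u' ∈ (Finset.univ : Finset V), u ≠ u' →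
      Disjoint (ch u) (ch u') := by
    intro u _ u' _ hne
    rw [Finset.disjoint_left]
    intro w hw hw'
    have hwr : w ≠ r := fun h => hroot u (h ▸ hw)
    exact hne ((hparent w hwr).unique hw hw')
  have hsum_children : ∀ g : V → ℝ,
      ∑ v : V, ∑ w ∈ ch v, g w = ∑ w ∈ Finset.univ.erase r, g w := by
    intro g
    rw [← hbiUnion, Finset.sum_biUnion hdisj]
  -- rearrangement identity
  have rearr : ∀ σ : V → A,
      ∑ v : V, (μs v (σ v) + ∑ w ∈ ch v, (Mx μs w - μs w (σ w)))
        = μs r (σ r) + ∑ w ∈ Finset.univ.erase r, Mx μs w := by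
    intro σ
    rw [Finset.sum_add_distrib, hsum_children (fun w => Mx μs w - μs w (σ w)),
      Finset.sum_sub_distrib]
    have h1 : ∑ v : V, μs v (σ v)
        = μs r (σ r) + ∑ w ∈ Finset.univ.erase r, μs w (σ w) :=
      (Finset.add_sum_erase _ _ (Finset.mem_univ r)).symm
    rw [h1]
    ring
  -- upper bound: every σ gives welfare ≤ ∑ Mx
  have upper : ∀ σ : V → A, ∑ v : V, θ v (σ v) σ ≤ ∑ v : V, Mx μs v := by
    intro σ
    have step : ∀ v : V, θ v (σ v) σ
        ≤ μs v (σ v) + ∑ w ∈ ch v, (Mx μs w - μs w (σ w)) := by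
      intro v
      have h1 : θ v (σ v) σ - ∑ w ∈ ch v, (Mx μs w - μs w (σ w)) ≤ μs v (σ v) := by
        rw [hμ v (σ v)]
        exact Finset.le_sup' (fun b : V → A => θ v (σ v) b - ∑ w ∈ ch v,
          (Finset.univ.sup' Finset.univ_nonempty (fun a' : A => μs w a') - μs w (b w)))
          (Finset.mem_univ σ)
      linarith
    calc ∑ v : V, θ v (σ v) σ
        ≤ ∑ v : V, (μs v (σ v) + ∑ w ∈ ch v, (Mx μs w - μs w (σ w))) :=
          Finset.sum_le_sum (fun v _ => step v)
      _ = μs r (σ r) + ∑ w ∈ Finset.univ.erase r, Mx μs w := rearr σ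
      _ ≤ Mx μs r + ∑ w ∈ Finset.univ.erase r, Mx μs w := by
          have : μs r (σ r) ≤ Mx μs r := Finset.le_sup' (μs r) (Finset.mem_univ (σ r))
          linarith
      _ = ∑ v : V, Mx μs v := Finset.add_sum_erase _ _ (Finset.mem_univ r)
  -- lower bound: σ = sig achieves ∑ Mx
  set σ : V → A := sig ch r rank hrank hparent θ μs with hσ
  have key : ∀ v : V, θ v (σ v) σ
      = μs v (σ v) + ∑ w ∈ ch v, (Mx μs w - μs w (σ w)) := by
    intro v
    have hag : ∀ w ∈ ch v, σ w = bsel ch θ μs v (σ v) w :=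
      fun w hw => sig_child ch r rank hrank hroot hparent θ μs hw
    have hθeq : θ v (σ v) σ = θ v (σ v) (bsel ch θ μs v (σ v)) :=
      hθ v (σ v) σ (bsel ch θ μs v (σ v)) hag
    have hsumeq : ∑ w ∈ ch v, (Mx μs w - μs w (σ w))
        = ∑ w ∈ ch v, (Mx μs w - μs w (bsel ch θ μs v (σ v) w)) :=
      Finset.sum_congr rfl (fun w hw => by rw [hag w hw])
    have hspec := bsel_spec ch θ μs v (σ v)
    have hμv : μs v (σ v) = Finset.univ.sup' Finset.univ_nonempty (fun b : V → A =>
        θ v (σ v) b - ∑ w ∈ ch v, (Mx μs w - μs w (b w))) := hμ v (σ v)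
    rw [hθeq, hsumeq, hμv, ← hspec]
    ring
  have lower : ∑ v : V, θ v (σ v) σ = ∑ v : V, Mx μs v := by
    calc ∑ v : V, θ v (σ v) σ
        = ∑ v : V, (μs v (σ v) + ∑ w ∈ ch v, (Mx μs w - μs w (σ w))) :=
          Finset.sum_congr rfl (fun v _ => key v)
      _ = μs r (σ r) + ∑ w ∈ Finset.univ.erase r, Mx μs w := rearr σ
      _ = Mx μs r + ∑ w ∈ Finset.univ.erase r, Mx μs w := by
          rw [hσ, sig_root ch r rank hrank hparent θ μs]
      _ = ∑ v : V, Mx μs v := Finset.add_sum_erase _ _ (Finset.mem_univ r)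
  refine le_antisymm ?_ (Finset.sup'_le _ _ fun b _ => upper b)
  calc ∑ v : V, Finset.univ.sup' Finset.univ_nonempty (fun a : A => μs v a)
      = ∑ v : V, θ v (σ v) σ := lower.symm
    _ ≤ Finset.univ.sup' Finset.univ_nonempty (fun σ' : V → A => ∑ v : V, θ v (σ' v) σ') :=
        Finset.le_sup' (fun σ' : V → A => ∑ v : V, θ v (σ' v) σ') (Finset.mem_univ σ)
end

section
/- Under the same setting, if the offered transfer satisfies τ ≤ τ*(b) − 1/T^β, then some action a ≠ b satisfies w(a) ≥ w(b) + τ + 1/T^β, so each round where the agent plays b incurs a shortfall of at least 1/T^β; hence if the agent's total shortfall over N = ⌈T^α⌉ rounds is at most C·N^κ, the number of rounds where the agent plays b is at most C·N^{κ+β/α}, i.e., N₀ ≥ N − C·N^{κ+β/α}. -/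
/-- Binary search classification, lower branch: if the transfer is at most τ*(b) − 1/T^β, then
some action a ≠ b beats b by at least 1/T^β, so under the shortfall bound C·N^κ the number of
rounds where the agent plays b is at most C·N^{κ+β/α}; hence N₀ ≥ N − C·N^{κ+β/α}. -/
theorem classification_lower {A : Type*} [Fintype A] [Nonempty A] [DecidableEq A]
    (C κ α β T : ℝ) (hC : 0 < C) (hκ0 : 0 ≤ κ) (hκ1 : κ < 1) (hα : 0 < α) (hβ : 0 < β)
    (hβα : β < α * (1 - κ)) (hT : 1 ≤ T)
    (w : A → ℝ) (b : A) (τ : ℝ) (act : ℕ → A) (hτ0 : 0 ≤ τ)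
    (hτ : τ ≤ Finset.univ.sup' Finset.univ_nonempty w - w b - 1 / T ^ β) :
    (∃ a : A, a ≠ b ∧ w b + τ + 1 / T ^ β ≤ w a) ∧
    ((∑ l ∈ Finset.Icc 1 ⌈T ^ α⌉₊,
        (Finset.univ.sup' Finset.univ_nonempty (fun a => w a + if a = b then τ else 0)
          - (w (act l) + if act l = b then τ else 0))
      ≤ C * ((⌈T ^ α⌉₊ : ℝ)) ^ κ) →
      (((Finset.Icc 1 ⌈T ^ α⌉₊).filter (fun l => act l = b)).card : ℝ)
          ≤ C * ((⌈T ^ α⌉₊ : ℝ)) ^ (κ + β / α) ∧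
        (⌈T ^ α⌉₊ : ℝ) - C * ((⌈T ^ α⌉₊ : ℝ)) ^ (κ + β / α)
          ≤ (((Finset.Icc 1 ⌈T ^ α⌉₊).filter (fun l => act l ≠ b)).card : ℝ)) := by
  have hT0 : (0:ℝ) < T := lt_of_lt_of_le one_pos hT
  have hTβ : (0:ℝ) < T ^ β := Real.rpow_pos_of_pos hT0 β
  have hδ : (0:ℝ) < 1 / T ^ β := by positivity
  obtain ⟨a, -, ha⟩ := Finset.exists_mem_eq_sup' (Finset.univ_nonempty (α := A)) w
  have hwa : w b + τ + 1 / T ^ β ≤ w a := by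
    have := hτ; rw [ha] at this; linarith
  have hab : a ≠ b := by
    intro h; rw [h] at hwa; linarith
  refine ⟨⟨a, hab, hwa⟩, fun hsum => ?_⟩
  set N := ⌈T ^ α⌉₊ with hN
  set f : A → ℝ := fun a => w a + if a = b then τ else 0 with hf
  have hTα1 : (1:ℝ) ≤ T ^ α := Real.one_le_rpow hT (le_of_lt hα)
  have hN1 : (1:ℝ) ≤ (N:ℝ) := le_trans hTα1 (Nat.le_ceil _)
  have hN0 : (0:ℝ) < (N:ℝ) := lt_of_lt_of_le one_pos hN1
  have hfa : f a = w a := by simp [hf, hab]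
  have hsup : w a ≤ Finset.univ.sup' Finset.univ_nonempty f := by
    rw [← hfa]; exact Finset.le_sup' f (Finset.mem_univ a)
  -- each term is nonneg
  have hnonneg : ∀ l ∈ Finset.Icc 1 N,
      (0:ℝ) ≤ Finset.univ.sup' Finset.univ_nonempty f - f (act l) := fun l _ =>
    sub_nonneg.mpr (Finset.le_sup' f (Finset.mem_univ _))
  -- terms on the filter are ≥ 1/T^β
  have hterm : ∀ l ∈ (Finset.Icc 1 N).filter (fun l => act l = b),
      1 / T ^ β ≤ Finset.univ.sup' Finset.univ_nonempty f - f (act l) := by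
    intro l hl
    have hb : act l = b := (Finset.mem_filter.mp hl).2
    have : f (act l) = w b + τ := by simp [hf, hb]
    rw [this]
    linarith
  have hkey : (((Finset.Icc 1 N).filter (fun l => act l = b)).card : ℝ) * (1 / T ^ β)
      ≤ C * (N:ℝ) ^ κ := by
    calc (((Finset.Icc 1 N).filter (fun l => act l = b)).card : ℝ) * (1 / T ^ β)
        = ∑ _l ∈ (Finset.Icc 1 N).filter (fun l => act l = b), 1 / T ^ β := by
          rw [Finset.sum_const, nsmul_eq_mul]
      _ ≤ ∑ l ∈ (Finset.Icc 1 N).filter (fun l => act l = b),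
            (Finset.univ.sup' Finset.univ_nonempty f - f (act l)) :=
          Finset.sum_le_sum hterm
      _ ≤ ∑ l ∈ Finset.Icc 1 N,
            (Finset.univ.sup' Finset.univ_nonempty f - f (act l)) :=
          Finset.sum_le_sum_of_subset_of_nonneg (Finset.filter_subset _ _)
            (fun l hl _ => hnonneg l hl)
      _ ≤ C * (N:ℝ) ^ κ := hsum
  have hcard1 : (((Finset.Icc 1 N).filter (fun l => act l = b)).card : ℝ)
      ≤ C * (N:ℝ) ^ κ * T ^ β := by
    have := mul_le_mul_of_nonneg_right hkey (le_of_lt hTβ)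
    rwa [mul_assoc, one_div_mul_cancel (ne_of_gt hTβ), mul_one] at this
  have hTβN : T ^ β ≤ (N:ℝ) ^ (β / α) := by
    have h1 : T ^ β = (T ^ α) ^ (β / α) := by
      rw [← Real.rpow_mul (le_of_lt hT0)]
      congr 1
      field_simp
    rw [h1]
    exact Real.rpow_le_rpow (le_of_lt (Real.rpow_pos_of_pos hT0 α)) (Nat.le_ceil _)
      (by positivity)
  have hcard2 : (((Finset.Icc 1 N).filter (fun l => act l = b)).card : ℝ)
      ≤ C * (N:ℝ) ^ (κ + β / α) := by
    calc (((Finset.Icc 1 N).filter (fun l => act l = b)).card : ℝ)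
        ≤ C * (N:ℝ) ^ κ * T ^ β := hcard1
      _ ≤ C * (N:ℝ) ^ κ * (N:ℝ) ^ (β / α) := by
          apply mul_le_mul_of_nonneg_left hTβN
          positivity
      _ = C * (N:ℝ) ^ (κ + β / α) := by
          rw [mul_assoc, ← Real.rpow_add hN0]
  refine ⟨hcard2, ?_⟩
  have hsplit : ((Finset.Icc 1 N).filter (fun l => act l = b)).card
      + ((Finset.Icc 1 N).filter (fun l => act l ≠ b)).card = N := by
    rw [Finset.card_filter_add_card_filter_not, Nat.card_Icc]
    omega
  have : (((Finset.Icc 1 N).filter (fun l => act l = b)).card : ℝ)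
      + (((Finset.Icc 1 N).filter (fun l => act l ≠ b)).card : ℝ) = (N:ℝ) := by
    exact_mod_cast congrArg (Nat.cast : ℕ → ℝ) hsplit
  linarith
end

section
/- Combining both branches: with the same hypotheses, if the number of non-acceptance rounds satisfies C·N^{κ+β/α} < N₀ < N − C·N^{κ+β/α} (conditionally on the agent's shortfall bound holding), then |τ − τ*(b)| ≤ 1/T^β. -/
/-- Binary search classification, combined: under the shortfall bound, if the number of
non-acceptance rounds N₀ satisfies C·N^{κ+β/α} < N₀ < N − C·N^{κ+β/α}, then the offered
transfer is within 1/T^β of the optimal incentive. -/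
theorem classification_combined {A : Type*} [Fintype A] [Nonempty A] [DecidableEq A]
    (C κ α β T : ℝ) (hC : 0 < C) (hκ0 : 0 ≤ κ) (hκ1 : κ < 1) (hα : 0 < α) (hβ : 0 < β)
    (hβα : β < α * (1 - κ)) (hT : 1 ≤ T)
    (w : A → ℝ) (b : A) (τ : ℝ) (act : ℕ → A) (hτ0 : 0 ≤ τ)
    (hshort : ∑ l ∈ Finset.Icc 1 ⌈T ^ α⌉₊,
        (Finset.univ.sup' Finset.univ_nonempty (fun a => w a + if a = b then τ else 0)
          - (w (act l) + if act l = b then τ else 0))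
      ≤ C * ((⌈T ^ α⌉₊ : ℝ)) ^ κ)
    (hN0lo : C * ((⌈T ^ α⌉₊ : ℝ)) ^ (κ + β / α)
      < (((Finset.Icc 1 ⌈T ^ α⌉₊).filter (fun l => act l ≠ b)).card : ℝ))
    (hN0hi : (((Finset.Icc 1 ⌈T ^ α⌉₊).filter (fun l => act l ≠ b)).card : ℝ)
      < (⌈T ^ α⌉₊ : ℝ) - C * ((⌈T ^ α⌉₊ : ℝ)) ^ (κ + β / α)) :
    |τ - (Finset.univ.sup' Finset.univ_nonempty w - w b)| ≤ 1 / T ^ β := by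
  set N := ⌈T ^ α⌉₊ with hNdef
  set M := Finset.univ.sup' Finset.univ_nonempty w with hM
  set S := Finset.univ.sup' Finset.univ_nonempty (fun a => w a + if a = b then τ else 0)
    with hS
  have hT0 : (0:ℝ) < T := lt_of_lt_of_le one_pos hT
  have hTβ : (0:ℝ) < T ^ β := Real.rpow_pos_of_pos hT0 β
  have hTα1 : (1:ℝ) ≤ T ^ α := Real.one_le_rpow hT hα.le
  have hNT : T ^ α ≤ (N:ℝ) := Nat.le_ceil _
  have hNpos : (0:ℝ) < (N:ℝ) := lt_of_lt_of_le (lt_of_lt_of_le one_pos hTα1) hNT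
  have hSb : w b + τ ≤ S := by
    have h : (fun a => w a + if a = b then τ else 0) b ≤ S :=
      Finset.le_sup' (fun a => w a + if a = b then τ else 0) (Finset.mem_univ b)
    simpa using h
  have hMS : M ≤ S := by
    apply Finset.sup'_le
    intro a _
    have h1 : w a ≤ w a + if a = b then τ else 0 := by
      split_ifs <;> linarith
    have h2 : (fun a => w a + if a = b then τ else 0) a ≤ S :=
      Finset.le_sup' (fun a => w a + if a = b then τ else 0) (Finset.mem_univ a)
    exact le_trans h1 h2
  have hterm : ∀ l, 0 ≤ S - (w (act l) + if act l = b then τ else 0) := by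
    intro l
    have h2 : (fun a => w a + if a = b then τ else 0) (act l) ≤ S :=
      Finset.le_sup' (fun a => w a + if a = b then τ else 0) (Finset.mem_univ (act l))
    exact sub_nonneg.2 h2
  -- key arithmetic: C * N^(κ+β/α) * (1/T^β) ≥ C * N^κ
  have hkey : C * (N:ℝ) ^ κ ≤ C * (N:ℝ) ^ (κ + β/α) * (1 / T ^ β) := by
    have hTβN : T ^ β ≤ (N:ℝ) ^ (β/α) := by
      have h1 : (T ^ α) ^ (β/α) ≤ (N:ℝ) ^ (β/α) :=
        Real.rpow_le_rpow (Real.rpow_nonneg hT0.le α) hNT (div_nonneg hβ.le hα.le)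
      have h2 : (T ^ α) ^ (β/α) = T ^ β := by
        rw [← Real.rpow_mul hT0.le, mul_div_cancel₀ β hα.ne']
      linarith
    have h1 : (1:ℝ) ≤ (N:ℝ) ^ (β/α) * (1 / T ^ β) := by
      rw [mul_one_div, le_div_iff₀ hTβ, one_mul]
      exact hTβN
    calc C * (N:ℝ) ^ κ = C * (N:ℝ) ^ κ * 1 := by ring
      _ ≤ C * (N:ℝ) ^ κ * ((N:ℝ) ^ (β/α) * (1 / T ^ β)) :=
          mul_le_mul_of_nonneg_left h1 (by positivity)
      _ = C * (N:ℝ) ^ (κ + β/α) * (1 / T ^ β) := by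
          rw [Real.rpow_add hNpos]; ring
  -- generic contradiction
  have contra : ∀ s : Finset ℕ, s ⊆ Finset.Icc 1 N →
      (∀ l ∈ s, 1 / T ^ β ≤ S - (w (act l) + if act l = b then τ else 0)) →
      C * (N:ℝ) ^ (κ + β/α) < (s.card : ℝ) → False := by
    intro s hsub hlow hcard
    have h1 : (s.card : ℝ) * (1 / T ^ β) ≤
        ∑ l ∈ s, (S - (w (act l) + if act l = b then τ else 0)) := by
      have := Finset.card_nsmul_le_sum s
        (fun l => S - (w (act l) + if act l = b then τ else 0)) (1 / T ^ β) hlow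
      simpa [nsmul_eq_mul] using this
    have h2 : ∑ l ∈ s, (S - (w (act l) + if act l = b then τ else 0)) ≤
        ∑ l ∈ Finset.Icc 1 N, (S - (w (act l) + if act l = b then τ else 0)) :=
      Finset.sum_le_sum_of_subset_of_nonneg hsub (fun l _ _ => hterm l)
    have h3 : C * (N:ℝ) ^ (κ + β/α) * (1 / T ^ β) < (s.card : ℝ) * (1 / T ^ β) :=
      mul_lt_mul_of_pos_right hcard (by positivity)
    have := hshort
    linarith
  by_contra hcon
  push_neg at hcon
  rcases lt_abs.1 hcon with hcase | hcase
  · -- τ too large: rounds with act ≠ b lose at least τ - τ*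
    refine contra ((Finset.Icc 1 N).filter (fun l => act l ≠ b))
      (Finset.filter_subset _ _) ?_ hN0lo
    intro l hl
    have hne : act l ≠ b := (Finset.mem_filter.1 hl).2
    have hwM : w (act l) ≤ M := Finset.le_sup' w (Finset.mem_univ (act l))
    rw [if_neg hne]
    linarith
  · -- τ too small: rounds with act = b lose at least τ* - τ
    have hsplit : ((Finset.Icc 1 N).filter (fun l => act l = b)).card +
        ((Finset.Icc 1 N).filter (fun l => act l ≠ b)).card = N := by
      rw [Finset.card_filter_add_card_filter_not, Nat.card_Icc]
      omega
    have hcard : C * (N:ℝ) ^ (κ + β/α) <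
        (((Finset.Icc 1 N).filter (fun l => act l = b)).card : ℝ) := by
      have : (((Finset.Icc 1 N).filter (fun l => act l = b)).card : ℝ) +
          (((Finset.Icc 1 N).filter (fun l => act l ≠ b)).card : ℝ) = (N:ℝ) := by
        exact_mod_cast congrArg (Nat.cast : ℕ → ℝ) hsplit
      linarith
    refine contra ((Finset.Icc 1 N).filter (fun l => act l = b))
      (Finset.filter_subset _ _) ?_ hcard
    intro l hl
    have heq : act l = b := (Finset.mem_filter.1 hl).2
    rw [heq, if_pos rfl]
    linarith
end
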